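/- Let D be a digraph, y ∈ V(D), and X, S, S′ ⊆ V(D) \ {y} with S ⊆ X. Suppose S is exactly the set of vertices of X having an in-neighbour reachable from y in D − X, and that the set of vertices reachable from y in D − S′ is a subset of the set of vertices reachable from y in D − S. Then every closed walk in D − ((X \ S) ∪ S′) passing through y also avoids X; i.e., if a closed walk W through y exists in D − ((X \ S) ∪ S′), then W is a closed walk in D − X. -/

import Mathlib

/-- Reachability by directed walks in a digraph given by its arc relation. -/
def Reach {V : Type*} (E : V → V → Prop) : V → V → Prop := Relation.ReflTransGen E

/-- The digraph obtained by deleting the vertex set `X` (induced subgraph on the complement). -/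
def Del {V : Type*} (E : V → V → Prop) (X : Set V) : V → V → Prop :=
  fun u v => E u v ∧ u ∉ X ∧ v ∉ X

/-- Two vertices are strongly connected (in the same strongly connected component). -/
def SCC {V : Type*} (E : V → V → Prop) (u v : V) : Prop := Reach E u v ∧ Reach E v u

/-- A closed directed walk, given as the list of visited vertices (first = last). -/
def ClosedWalk {V : Type*} (E : V → V → Prop) (l : List V) : Prop :=
  l.Chain' E ∧ 2 ≤ l.length ∧ l.head? = l.getLast?

/-- The walk `l` traverses an arc from the arc set `A`. -/
def ContainsArc {V : Type*} (A : V → V → Prop) (l : List V) : Prop :=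
  ∃ l₁ a b l₂, l = l₁ ++ a :: b :: l₂ ∧ A a b

/-- A `Z`-walk from `u` to `v`: a directed walk with endpoints `u, v ∉ Z`
and all internal vertices in `Z`. -/
def ZWalk {V : Type*} (E : V → V → Prop) (Z : Set V) (u v : V) (l : List V) : Prop :=
  l.Chain' E ∧ 2 ≤ l.length ∧ l.head? = some u ∧ l.getLast? = some v ∧
  u ∉ Z ∧ v ∉ Z ∧ ∀ x ∈ (l.drop 1).dropLast, x ∈ Z


lemma chain'_head_reach {V : Type*} {R : V → V → Prop} :
    ∀ {a : V} {t : List V}, (a :: t).Chain' R → ∀ v ∈ a :: t, Relation.ReflTransGen R a v := by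
  intro a t
  induction t generalizing a with
  | nil => intro _ v hv; simp at hv; subst hv; exact .refl
  | cons b t ih =>
    intro hc v hv
    rcases List.mem_cons.1 hv with rfl | hv
    · exact .refl
    · have hab : R a b := (List.isChain_cons_cons.1 hc).1
      exact (Relation.ReflTransGen.single hab).trans (ih (List.isChain_cons_cons.1 hc).2 v hv)

lemma chain'_reach_last {V : Type*} {R : V → V → Prop} :
    ∀ {a : V} {t : List V}, (a :: t).Chain' R → ∀ v ∈ a :: t,
      Relation.ReflTransGen R v ((a :: t).getLast (by simp)) := by
  intro a t
  induction t generalizing a with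
  | nil => intro _ v hv; simp at hv; subst hv; exact .refl
  | cons b t ih =>
    intro hc v hv
    have h2 := (List.isChain_cons_cons.1 hc).2
    rcases List.mem_cons.1 hv with h | hv
    · subst h
      have hab : R v b := (List.isChain_cons_cons.1 hc).1
      have := ih h2 b (by simp)
      simpa [List.getLast] using (Relation.ReflTransGen.single hab).trans this
    · simpa [List.getLast] using ih h2 v hv

lemma chain'_and_mem {V : Type*} {R P : V → V → Prop} :
    ∀ {l : List V}, l.Chain' R → (∀ a ∈ l, ∀ b ∈ l, R a b → P a b) → l.Chain' P := by
  intro l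
  induction l with
  | nil => intros; exact List.isChain_nil
  | cons a t ih =>
    intro hc hP
    cases t with
    | nil => exact List.isChain_singleton _
    | cons b t =>
      rw [List.Chain', List.isChain_cons_cons] at hc ⊢
      exact ⟨hP a (by simp) b (by simp) hc.1,
        ih hc.2 (fun x hx z hz h => hP x (by simp [hx]) z (by simp [hz]) h)⟩

lemma chain'_del_not_mem {V : Type*} {E : V → V → Prop} {A : Set V} :
    ∀ {a b : V} {t : List V}, (a :: b :: t).Chain' (Del E A) → ∀ v ∈ a :: b :: t, v ∉ A := by
  intro a b t
  induction t generalizing a b with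
  | nil =>
    intro hc v hv
    obtain ⟨h, -⟩ := List.isChain_cons_cons.1 hc
    simp only [List.mem_cons, List.not_mem_nil, or_false] at hv
    rcases hv with rfl | rfl
    · exact h.2.1
    · exact h.2.2
  | cons c t ih =>
    intro hc v hv
    obtain ⟨h, h2⟩ := List.isChain_cons_cons.1 hc
    rcases List.mem_cons.1 hv with hva | hv
    · subst hva; exact h.2.1
    · exact ih h2 v hv

/-- The pushing step: let `S ⊆ X` be the vertices of `X` with an in-neighbour reachable from
`y` in `D − X`, and let `S'` be a cut with the set of vertices reachable from `y` in `D − S'`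
contained in the one for `D − S`. Then any closed walk through `y` in `D − ((X \ S) ∪ S')`
avoids `X`, i.e. it is a closed walk in `D − X`. -/
theorem pushing_preserves {V : Type*} (E : V → V → Prop) (y : V) (X S S' : Set V)
    (hyX : y ∉ X) (hyS' : y ∉ S') (hSX : S ⊆ X)
    (hSdef : S = {x | x ∈ X ∧ ∃ u, E u x ∧ Reach (Del E X) y u})
    (hpush : {w | Reach (Del E S') y w} ⊆ {w | Reach (Del E S) y w})
    (l : List V) (hl : ClosedWalk (Del E ((X \ S) ∪ S')) l) (hy : y ∈ l) :
    ClosedWalk (Del E X) l := by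
  obtain ⟨hc, hlen, hcl⟩ := hl
  obtain ⟨a, t⟩ : ∃ a t, l = a :: t := by
    cases l with
    | nil => simp at hlen
    | cons a t => exact ⟨a, t, rfl⟩
  obtain ⟨t, rfl⟩ := t
  -- the chain also lives in Del E S'
  have hcS' : (a :: t).Chain' (Del E S') :=
    hc.imp (fun {u v} h => ⟨h.1, fun hu => h.2.1 (Or.inr hu), fun hv => h.2.2 (Or.inr hv)⟩)
  have hlast : (a :: t).getLast (by simp) = a := by
    have := (a :: t).getLast?_eq_getLast (by simp)
    rw [this] at hcl
    simpa using hcl.symm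
  -- every vertex of l is reachable from y in Del E S'
  have hreach : ∀ v ∈ a :: t, Reach (Del E S') y v := by
    intro v hv
    have h1 : Relation.ReflTransGen (Del E S') y ((a :: t).getLast (by simp)) :=
      chain'_reach_last hcS' y hy
    rw [hlast] at h1
    exact h1.trans (chain'_head_reach hcS' v hv)
  -- hence not in S
  have hnS : ∀ v ∈ a :: t, v ∉ S := by
    intro v hv hvS
    have hr : Reach (Del E S) y v := hpush (hreach v hv)
    rcases Relation.ReflTransGen.cases_tail hr with h | ⟨c, _, hcv⟩
    · exact hyX (hSX (h ▸ hvS))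
    · exact hcv.2.2 hvS
  -- not in the deleted set
  have hnD : ∀ v ∈ a :: t, v ∉ (X \ S) ∪ S' := by
    cases t with
    | nil => simp at hlen
    | cons b t => exact chain'_del_not_mem hc
  have hnX : ∀ v ∈ a :: t, v ∉ X := fun v hv hvX =>
    hnD v hv (Or.inl ⟨hvX, hnS v hv⟩)
  refine ⟨chain'_and_mem hc (fun u hu v hv h => ⟨h.1, hnX u hu, hnX v hv⟩), hlen, hcl⟩
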